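/- Let θ and θ₀ be Lagrange planes in ℂ^n × ℂ^n with respect to the indefinite inner product [(a;b),(a';b')] = i((b,a') − (a,b')), and let Π be a linear subspace with θ ∩ θ₀ ⊆ Π ⊆ θ₀. Then there exists a Lagrange plane θ' such that θ' ∩ θ₀ = Π and dim(θ / (θ ∩ θ')) = dim Π − dim(θ ∩ θ₀). -/

import Mathlib

open Module

noncomputable def lform (n : ℕ) (x y : (Fin n → ℂ) × (Fin n → ℂ)) : ℂ :=
  Complex.I * ((∑ i, x.2 i * star (y.1 i)) - (∑ i, x.1 i * star (y.2 i)))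

def IsLagrange (n : ℕ) (θ : Submodule ℂ ((Fin n → ℂ) × (Fin n → ℂ))) : Prop :=
  (∀ x ∈ θ, ∀ y ∈ θ, lform n x y = 0) ∧ Module.finrank ℂ θ = n

/-- The standard symplectic bilinear form. -/
noncomputable def sB (n : ℕ) :
    LinearMap.BilinForm ℂ ((Fin n → ℂ) × (Fin n → ℂ)) :=
  LinearMap.mk₂ ℂ
    (fun x y => Complex.I * ((∑ i, x.2 i * y.1 i) - (∑ i, x.1 i * y.2 i)))
    (by
      intro m₁ m₂ y
      simp [Pi.add_apply, add_mul, Finset.sum_add_distrib]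
      ring)
    (by
      intro c m y
      simp only [Prod.smul_fst, Prod.smul_snd, Pi.smul_apply, smul_eq_mul]
      rw [show (∑ i, c * m.2 i * y.1 i) = c * ∑ i, m.2 i * y.1 i by
        rw [Finset.mul_sum]; exact Finset.sum_congr rfl fun i _ => by ring]
      rw [show (∑ i, c * m.1 i * y.2 i) = c * ∑ i, m.1 i * y.2 i by
        rw [Finset.mul_sum]; exact Finset.sum_congr rfl fun i _ => by ring]
      ring)
    (by
      intro m y₁ y₂
      simp [Pi.add_apply, mul_add, Finset.sum_add_distrib]
      ring)
    (by
      intro c m y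
      simp only [Prod.smul_fst, Prod.smul_snd, Pi.smul_apply, smul_eq_mul]
      rw [show (∑ i, m.2 i * (c * y.1 i)) = c * ∑ i, m.2 i * y.1 i by
        rw [Finset.mul_sum]; exact Finset.sum_congr rfl fun i _ => by ring]
      rw [show (∑ i, m.1 i * (c * y.2 i)) = c * ∑ i, m.1 i * y.2 i by
        rw [Finset.mul_sum]; exact Finset.sum_congr rfl fun i _ => by ring]
      ring)

lemma sB_apply (n : ℕ) (x y : (Fin n → ℂ) × (Fin n → ℂ)) :
    sB n x y = Complex.I * ((∑ i, x.2 i * y.1 i) - (∑ i, x.1 i * y.2 i)) := rfl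

/-- Conjugation, as a star-semilinear map. -/
def cj (n : ℕ) :
    ((Fin n → ℂ) × (Fin n → ℂ)) →ₛₗ[starRingEnd ℂ] ((Fin n → ℂ) × (Fin n → ℂ)) where
  toFun x := (fun i => star (x.1 i), fun i => star (x.2 i))
  map_add' x y := by ext i <;> simp
  map_smul' c x := by ext i <;> simp [mul_comm]

lemma cj_cj (n : ℕ) (x : (Fin n → ℂ) × (Fin n → ℂ)) : cj n (cj n x) = x := by
  ext i <;> simp [cj]

lemma lform_eq (n : ℕ) (x y : (Fin n → ℂ) × (Fin n → ℂ)) :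
    lform n x y = sB n x (cj n y) := rfl

lemma sB_alt (n : ℕ) : (sB n).IsAlt := by
  intro x
  rw [sB_apply]
  have : (∑ i, x.2 i * x.1 i) = ∑ i, x.1 i * x.2 i :=
    Finset.sum_congr rfl fun i _ => mul_comm _ _
  rw [this]; ring

lemma sB_refl (n : ℕ) : (sB n).IsRefl := (sB_alt n).isRefl

lemma sB_nondeg (n : ℕ) : (sB n).Nondegenerate := by
  refine (sB_refl n).nondegenerate_iff_separatingLeft.mpr ?_
  intro x hx
  have h1 : ∀ i, x.1 i = 0 := by
    intro i
    have h := hx (0, Pi.single i 1)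
    rw [sB_apply] at h
    simp [Pi.single_apply, mul_ite, Finset.sum_ite_eq', Complex.ext_iff] at h
    simpa [Complex.ext_iff] using h
  have h2 : ∀ i, x.2 i = 0 := by
    intro i
    have h := hx (Pi.single i 1, 0)
    rw [sB_apply] at h
    simpa [Pi.single_apply, mul_ite, Finset.sum_ite_eq', Complex.ext_iff] using h
  ext i
  · exact h1 i
  · exact h2 i

instance : RingHomSurjective (starRingEnd ℂ) :=
  ⟨fun x => ⟨star x, by simp⟩⟩

/-- Hermitian symmetry relating the two slots. -/
lemma sB_cj_herm (n : ℕ) (a b : (Fin n → ℂ) × (Fin n → ℂ)) :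
    sB n (cj n a) b = star (sB n (cj n b) a) := by
  rw [sB_apply, sB_apply]
  rw [star_mul', star_sub, Complex.star_def, Complex.conj_I]
  rw [show (starRingEnd ℂ) (∑ i, (cj n b).2 i * a.1 i) = ∑ i, b.2 i * star (a.1 i) by
    rw [map_sum]; exact Finset.sum_congr rfl fun i _ => by simp [cj, mul_comm]]
  rw [show (starRingEnd ℂ) (∑ i, (cj n b).1 i * a.2 i) = ∑ i, b.1 i * star (a.2 i) by
    rw [map_sum]; exact Finset.sum_congr rfl fun i _ => by simp [cj, mul_comm]]
  have e1 : (∑ i, (cj n a).2 i * b.1 i) = ∑ i, b.1 i * star (a.2 i) :=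
    Finset.sum_congr rfl fun i _ => by simp [cj, mul_comm]
  have e2 : (∑ i, (cj n a).1 i * b.2 i) = ∑ i, b.2 i * star (a.1 i) :=
    Finset.sum_congr rfl fun i _ => by simp [cj, mul_comm]
  rw [e1, e2]; ring

noncomputable def cjEquiv (n : ℕ) (N : Submodule ℂ ((Fin n → ℂ) × (Fin n → ℂ))) :
    N ≃+ (N.map (cj n)) where
  toFun x := ⟨cj n x, Submodule.mem_map_of_mem x.2⟩
  invFun y := ⟨cj n y, by
    obtain ⟨x, hx, hxe⟩ := y.2
    rw [← hxe, cj_cj]; exact hx⟩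
  left_inv x := Subtype.ext (cj_cj n x)
  right_inv y := Subtype.ext (cj_cj n y)
  map_add' x y := Subtype.ext (by exact map_add (cj n) x.1 y.1)

lemma finrank_map_cj (n : ℕ) (N : Submodule ℂ ((Fin n → ℂ) × (Fin n → ℂ))) :
    finrank ℂ (N.map (cj n)) = finrank ℂ N := by
  have := _root_.rank_eq_of_equiv_equiv (R := ℂ) (R' := ℂ)
    (M := N) (M₁ := (N.map (cj n)))
    (fun z => star z) (cjEquiv n N) star_involutive.bijective
    (fun r m => Subtype.ext (by exact (cj n).map_smul' r m.1))
  exact (congrArg Cardinal.toNat this).symm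

lemma orthogonal_sup (n : ℕ) (N L : Submodule ℂ ((Fin n → ℂ) × (Fin n → ℂ))) :
    (sB n).orthogonal (N ⊔ L) = (sB n).orthogonal N ⊓ (sB n).orthogonal L := by
  apply le_antisymm
  · exact le_inf ((sB n).orthogonal_le le_sup_left) ((sB n).orthogonal_le le_sup_right)
  · rintro x ⟨hxN, hxL⟩ y hy
    obtain ⟨a, ha, b, hb, rfl⟩ := Submodule.mem_sup.mp hy
    rw [map_add, LinearMap.add_apply,
      show ((sB n) a) x = 0 from hxN a ha, show ((sB n) b) x = 0 from hxL b hb, add_zero]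

lemma finrank_orthogonal' (n : ℕ) (W : Submodule ℂ ((Fin n → ℂ) × (Fin n → ℂ))) :
    finrank ℂ ((sB n).orthogonal W) + finrank ℂ W = 2 * n := by
  have hV : finrank ℂ ((Fin n → ℂ) × (Fin n → ℂ)) = 2 * n := by
    simp [Module.finrank_prod]; ring
  have hle : finrank ℂ W ≤ 2 * n := hV ▸ Submodule.finrank_le W
  rw [LinearMap.BilinForm.finrank_orthogonal (sB_nondeg n) W, hV]
  omega

/-- A neutral subspace is contained in the orthogonal of its conjugate. -/
lemma neutral_le_orth (n : ℕ) (N : Submodule ℂ ((Fin n → ℂ) × (Fin n → ℂ)))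
    (hN : ∀ x ∈ N, ∀ y ∈ N, lform n x y = 0) :
    N ≤ (sB n).orthogonal (N.map (cj n)) := by
  intro x hx z hz
  obtain ⟨y, hy, rfl⟩ := hz
  exact sB_refl n _ _ (hN x hx y hy)

theorem stmt13 (n : ℕ) (θ θ₀ P : Submodule ℂ ((Fin n → ℂ) × (Fin n → ℂ)))
    (hθ : IsLagrange n θ) (hθ₀ : IsLagrange n θ₀)
    (h1 : θ ⊓ θ₀ ≤ P) (h2 : P ≤ θ₀) :
    ∃ θ' : Submodule ℂ ((Fin n → ℂ) × (Fin n → ℂ)), IsLagrange n θ' ∧ θ' ⊓ θ₀ = P ∧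
      Module.finrank ℂ θ - Module.finrank ℂ ↥(θ ⊓ θ') =
        Module.finrank ℂ P - Module.finrank ℂ ↥(θ ⊓ θ₀) := by
  classical
  obtain ⟨hθn, hθr⟩ := hθ
  obtain ⟨hθ₀n, hθ₀r⟩ := hθ₀
  set Q : Submodule ℂ ((Fin n → ℂ) × (Fin n → ℂ)) :=
    θ ⊓ (sB n).orthogonal (P.map (cj n)) with hQ
  set θ' : Submodule ℂ ((Fin n → ℂ) × (Fin n → ℂ)) := P ⊔ Q with hθ'
  -- θ ⊓ P = θ ⊓ θ₀
  have hθP : θ ⊓ P = θ ⊓ θ₀ :=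
    le_antisymm (le_inf inf_le_left (le_trans inf_le_right h2)) (le_inf inf_le_left h1)
  -- θ ⊓ θ₀ ≤ Q
  have hk_le_Q : θ ⊓ θ₀ ≤ Q := by
    apply le_inf inf_le_left
    intro x hx z hz
    obtain ⟨y, hy, rfl⟩ := hz
    exact sB_refl n _ _ (hθ₀n x hx.2 y (h2 hy))
  -- θ = orth (conj θ)
  have hθeq : θ = (sB n).orthogonal (θ.map (cj n)) := by
    apply Submodule.eq_of_le_of_finrank_le (neutral_le_orth n θ hθn)
    have := finrank_orthogonal' n (θ.map (cj n))
    rw [finrank_map_cj, hθr] at this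
    omega
  -- P ⊓ Q = θ ⊓ θ₀
  have hPQ : P ⊓ Q = θ ⊓ θ₀ := by
    apply le_antisymm
    · calc P ⊓ Q ≤ θ ⊓ P := le_inf (le_trans inf_le_right inf_le_left) inf_le_left
        _ = θ ⊓ θ₀ := hθP
    · exact le_inf h1 hk_le_Q
  -- dim Q
  have hQeq : Q = (sB n).orthogonal ((θ ⊔ P).map (cj n)) := by
    rw [Submodule.map_sup, orthogonal_sup, ← hθeq]
  have hQrank : finrank ℂ Q + finrank ℂ (θ ⊔ P : Submodule ℂ _) = 2 * n := by
    rw [hQeq]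
    have := finrank_orthogonal' n ((θ ⊔ P).map (cj n))
    rwa [finrank_map_cj] at this
  have hsupθP : finrank ℂ (θ ⊔ P : Submodule ℂ _) + finrank ℂ (θ ⊓ θ₀ : Submodule ℂ _)
      = finrank ℂ θ + finrank ℂ P := by
    rw [← hθP]; exact Submodule.finrank_sup_add_finrank_inf_eq θ P
  have hk_le_p : finrank ℂ (θ ⊓ θ₀ : Submodule ℂ _) ≤ finrank ℂ P :=
    Submodule.finrank_mono h1
  have hp_le_n : finrank ℂ P ≤ n :=
    le_trans (Submodule.finrank_mono h2) (le_of_eq hθ₀r)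
  -- dim θ'
  have hθ'rank : finrank ℂ θ' = n := by
    have h := Submodule.finrank_sup_add_finrank_inf_eq P Q
    rw [hPQ, ← hθ'] at h
    omega
  -- θ' is neutral
  have hθ'le : θ' ≤ (sB n).orthogonal (θ'.map (cj n)) := by
    rw [hθ', Submodule.map_sup, orthogonal_sup]
    apply sup_le
    · apply le_inf
      · exact neutral_le_orth n P (fun x hx y hy => hθ₀n x (h2 hx) y (h2 hy))
      · -- P ≤ orth (conj Q)
        intro x hx z hz
        obtain ⟨q, hq, rfl⟩ := hz
        have h0 : sB n (cj n x) q = 0 := hq.2 (cj n x) (Submodule.mem_map_of_mem hx)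
        rw [sB_cj_herm, h0, star_zero]
    · apply le_inf
      · exact inf_le_right
      · calc Q ≤ θ := inf_le_left
          _ ≤ (sB n).orthogonal (θ.map (cj n)) := hθeq.le
          _ ≤ (sB n).orthogonal (Q.map (cj n)) :=
            (sB n).orthogonal_le (Submodule.map_mono inf_le_left)
  have hθ'neutral : ∀ x ∈ θ', ∀ y ∈ θ', lform n x y = 0 := by
    intro x hx y hy
    rw [lform_eq]
    exact sB_refl n _ _ (hθ'le hx (cj n y) (Submodule.mem_map_of_mem hy))
  -- θ' ⊓ θ₀ = P
  have hθ'θ₀ : θ' ⊓ θ₀ = P := by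
    apply le_antisymm
    · rintro x ⟨hx1, hx2⟩
      obtain ⟨u, hu, v, hv, rfl⟩ := Submodule.mem_sup.mp hx1
      have hvθ₀ : v ∈ θ₀ := by
        have : v = u + v - u := by ring_nf
        rw [this]
        exact Submodule.sub_mem θ₀ hx2 (h2 hu)
      have : v ∈ P := h1 ⟨hv.1, hvθ₀⟩
      exact Submodule.add_mem P hu this
    · exact le_inf le_sup_left h2
  -- θ ⊓ θ' = Q
  have hθθ' : θ ⊓ θ' = Q := by
    apply le_antisymm
    · rintro x ⟨hx1, hx2⟩
      obtain ⟨u, hu, v, hv, rfl⟩ := Submodule.mem_sup.mp hx2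
      have huθ : u ∈ θ := by
        have : u = u + v - v := by ring_nf
        rw [this]
        exact Submodule.sub_mem θ hx1 hv.1
      have : u ∈ Q := hk_le_Q (hθP ▸ (⟨huθ, hu⟩ : u ∈ θ ⊓ P))
      exact Submodule.add_mem Q this hv
    · exact le_inf inf_le_left le_sup_right
  refine ⟨θ', ⟨hθ'neutral, hθ'rank⟩, hθ'θ₀, ?_⟩
  rw [hθθ', hθr]
  omega
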